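/- Let F be the Minkowski gauge of a compact convex body K ⊂ ℝⁿ with 0 in its interior, with F of class C¹ on ℝⁿ∖{0}, C ≥ 1 a constant with F(−v) ≤ C·F(v) for all v, and assume the Legendre map ℓ is a homeomorphism of ℝⁿ onto (ℝⁿ)*. Let p > 1 and let μ be a Borel probability measure with supp(μ) ⊆ B(x₀,R), and assume E_{μ,p} is strictly convex on B̄(x₀, C(1+C)R). Let a ↦ x(a) be a C¹ path solving x(0) = x₀ and x′(a) = ℓ⁻¹(−D E_{μ,p}(x(a))) for a ≥ 0. Then x(a) ∈ B̄(x₀, C(1+C)R) for all a ≥ 0, and x(a) converges as a → ∞ to the unique minimizer e_p of E_{μ,p} on B̄(x₀, C(1+C)R). -/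

import Mathlib

open MeasureTheory
open Topology Filter Set

set_option maxHeartbeats 2000000

/-- Convergence of the continuous-time gradient flow to the `p`-mean in
the flat Minkowski model: for `F` the gauge of a compact convex body (`C¹` away from `0`,
`F(-v) ≤ C F(v)`, Legendre map `ℓ` a homeomorphism with inverse `ℓinv`), `p > 1`, `μ`
supported in `B(x₀,R)` with `E = E_{μ,p}` strictly convex on `B̄(x₀,C(1+C)R)`, every `C¹`
path with `x(0) = x₀` and `x'(a) = ℓ⁻¹(-D E(x(a)))` stays in `B̄(x₀,C(1+C)R)` and
converges to the unique minimizer `e_p` of `E` on that ball. -/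
theorem p_mean_gradient_flow_converges
    {n : ℕ} (K : Set (EuclideanSpace ℝ (Fin n)))
    (hK_cpt : IsCompact K) (hK_conv : Convex ℝ K)
    (hK_int : (0 : EuclideanSpace ℝ (Fin n)) ∈ interior K)
    (F : EuclideanSpace ℝ (Fin n) → ℝ) (hF : F = gauge K)
    (hFsmooth : ContDiffOn ℝ 1 F {(0 : EuclideanSpace ℝ (Fin n))}ᶜ)
    (C : ℝ) (hC : 1 ≤ C) (hrev : ∀ v, F (-v) ≤ C * F v)
    (ℓ : EuclideanSpace ℝ (Fin n) → (EuclideanSpace ℝ (Fin n) →L[ℝ] ℝ))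
    (hℓ : ∀ v, v ≠ 0 → ℓ v = (1 / 2 : ℝ) • fderiv ℝ (fun w => F w ^ 2) v)
    (hℓ0 : ℓ 0 = 0)
    (ℓinv : (EuclideanSpace ℝ (Fin n) →L[ℝ] ℝ) → EuclideanSpace ℝ (Fin n))
    (hleft : Function.LeftInverse ℓinv ℓ) (hright : Function.RightInverse ℓinv ℓ)
    (hℓcont : Continuous ℓ) (hℓinvcont : Continuous ℓinv)
    (p : ℝ) (hp : 1 < p)
    (x₀ : EuclideanSpace ℝ (Fin n)) (R : ℝ) (hR : 0 < R)
    (μ : Measure (EuclideanSpace ℝ (Fin n))) [IsProbabilityMeasure μ]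
    (hsupp : μ {z | F (z - x₀) < R}ᶜ = 0)
    (E : EuclideanSpace ℝ (Fin n) → ℝ)
    (hE : E = fun x => ∫ z, F (z - x) ^ p ∂μ)
    (hEconv : StrictConvexOn ℝ {x | F (x - x₀) ≤ C * (1 + C) * R} E)
    (γ : ℝ → EuclideanSpace ℝ (Fin n)) (hγ0 : γ 0 = x₀)
    (hode : ∀ a : ℝ, 0 ≤ a → HasDerivAt γ (ℓinv (-(fderiv ℝ E (γ a)))) a) :
    (∀ a : ℝ, 0 ≤ a → F (γ a - x₀) ≤ C * (1 + C) * R) ∧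
    (∃ ep : EuclideanSpace ℝ (Fin n),
      (F (ep - x₀) ≤ C * (1 + C) * R ∧
        ∀ y, F (y - x₀) ≤ C * (1 + C) * R → E ep ≤ E y) ∧
      (∀ m, (F (m - x₀) ≤ C * (1 + C) * R ∧
        ∀ y, F (y - x₀) ≤ C * (1 + C) * R → E m ≤ E y) → m = ep) ∧
      Filter.Tendsto γ Filter.atTop (nhds ep)) := by
  classical
  have hC0 : 0 < C := lt_of_lt_of_le one_pos hC
  classical
  have hKnhds : K ∈ 𝓝 (0 : EuclideanSpace ℝ (Fin n)) := mem_interior_iff_mem_nhds.1 hK_int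
  have habs : Absorbent ℝ K := absorbent_nhds_zero hKnhds
  have hFcont : Continuous F := hF ▸ continuous_gauge hK_conv hKnhds
  have hFnonneg : ∀ v, 0 ≤ F v := fun v => hF ▸ gauge_nonneg v
  have hF0 : F 0 = 0 := hF ▸ gauge_zero
  have hbdd : Bornology.IsVonNBounded ℝ K := NormedSpace.isVonNBounded_iff ℝ |>.2 hK_cpt.isBounded
  have hFeq0 : ∀ v, F v = 0 ↔ v = 0 := fun v => hF ▸ gauge_eq_zero habs hbdd
  have hFadd : ∀ x y, F (x + y) ≤ F x + F y := fun x y => hF ▸ gauge_add_le hK_conv habs x y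
  have hFsmul : ∀ (a : ℝ), 0 ≤ a → ∀ v, F (a • v) = a * F v := fun a ha v => by
    rw [hF]; simpa using gauge_smul_of_nonneg ha v
  obtain ⟨Mk, hlipK⟩ := hK_conv.lipschitz_gauge hKnhds
  have hlip : LipschitzWith Mk F := hF ▸ hlipK
  set M : ℝ := (Mk : ℝ) with hM
  have hM0 : 0 ≤ M := Mk.coe_nonneg
  have hFle : ∀ v, F v ≤ M * ‖v‖ := by
    intro v
    have := hlip.dist_le_mul v 0
    rw [Real.dist_eq, hF0, sub_zero, dist_zero_right] at this
    exact (le_abs_self _).trans this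
  have hDFle : ∀ v, ‖fderiv ℝ F v‖ ≤ M := fun v => norm_fderiv_le_of_lipschitz ℝ hlip
  obtain ⟨r2, hKr2⟩ := hK_cpt.isBounded.subset_closedBall 0
  set M₂ : ℝ := max r2 1 with hM₂
  have hM₂0 : 0 < M₂ := lt_of_lt_of_le one_pos (le_max_right _ _)
  have hFge : ∀ v, ‖v‖ ≤ M₂ * F v := by
    intro v
    have h : ‖v‖ / M₂ ≤ gauge K v := le_gauge_of_subset_closedBall (x := v) habs hM₂0.le
      (hKr2.trans (Metric.closedBall_subset_closedBall (le_max_left _ _)))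
    rw [← hF, div_le_iff₀ hM₂0] at h
    linarith [h]
  have hcpt : ∀ (c : EuclideanSpace ℝ (Fin n)) (r : ℝ), IsCompact {x | F (x - c) ≤ r} := by
    intro c r
    refine IsCompact.of_isClosed_subset (isCompact_closedBall c (M₂ * r)) ?_ ?_
    · exact isClosed_le (hFcont.comp (continuous_id.sub continuous_const)) continuous_const
    · intro x hx
      simp only [Set.mem_setOf_eq] at hx
      have := (hFge (x - c)).trans (by nlinarith [hM₂0] : M₂ * F (x - c) ≤ M₂ * r)
      simpa [Metric.mem_closedBall, dist_eq_norm] using this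
  have hFdiff : ∀ v : EuclideanSpace ℝ (Fin n), v ≠ 0 → DifferentiableAt ℝ F v := fun v hv =>
    (hFsmooth.contDiffAt (isOpen_compl_singleton.mem_nhds hv)).differentiableAt one_ne_zero
  have hDFcont : ContinuousOn (fderiv ℝ F) {(0 : EuclideanSpace ℝ (Fin n))}ᶜ :=
    hFsmooth.continuousOn_fderiv_of_isOpen isOpen_compl_singleton le_rfl
  have hEuler : ∀ v : EuclideanSpace ℝ (Fin n), v ≠ 0 → fderiv ℝ F v v = F v := by
    intro v hv
    have hcurve : HasDerivAt (fun t : ℝ => t • v) v 1 := by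
      simpa using (hasDerivAt_id (1 : ℝ)).smul_const v
    have h1 : HasDerivAt (fun t : ℝ => F (t • v)) (fderiv ℝ F v v) 1 := by
      have hd : HasFDerivAt F (fderiv ℝ F v) ((fun t : ℝ => t • v) 1) := by
        simpa using (hFdiff v hv).hasFDerivAt
      exact hd.comp_hasDerivAt 1 hcurve
    have heq : (fun t : ℝ => F (t • v)) =ᶠ[𝓝 (1:ℝ)] fun t => t * F v := by
      filter_upwards [Ioi_mem_nhds (by norm_num : (0:ℝ) < 1)] with t ht
      exact hFsmul t (le_of_lt ht) v
    have h2 : HasDerivAt (fun t : ℝ => F (t • v)) (F v) 1 := by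
      have : HasDerivAt (fun t : ℝ => t * F v) (F v) 1 := by
        simpa using (hasDerivAt_id (1:ℝ)).mul_const (F v)
      exact this.congr_of_eventuallyEq heq
    exact h1.unique h2
  have hℓapp : ∀ v, ℓ v v = F v * F v := by
    intro v
    by_cases hv : v = 0
    · subst hv; rw [hℓ0]; simp [hF0]
    · have hsq : (fun w => F w ^ 2) = fun w => F w * F w := by ext w; ring
      have h2 : HasFDerivAt (fun w => F w ^ 2)
          (F v • fderiv ℝ F v + F v • fderiv ℝ F v) v := by
        rw [hsq]
        exact (hFdiff v hv).hasFDerivAt.mul (hFdiff v hv).hasFDerivAt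
      rw [hℓ v hv, h2.fderiv]
      simp only [ContinuousLinearMap.smul_apply, ContinuousLinearMap.add_apply,
        smul_eq_mul, hEuler v hv]
      ring
  have hp0 : 0 < p := lt_trans one_pos hp
  have hp1 : 0 < p - 1 := sub_pos.2 hp
  set Φ : EuclideanSpace ℝ (Fin n) → (EuclideanSpace ℝ (Fin n) →L[ℝ] ℝ) :=
    fun v => if v = 0 then 0 else (p * F v ^ (p - 1)) • fderiv ℝ F v with hΦdef
  -- norm bound on Φ
  have hΦnorm : ∀ v, ‖Φ v‖ ≤ p * (M * ‖v‖) ^ (p - 1) * M := by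
    intro v
    by_cases hv : v = 0
    · have hz : Φ v = 0 := by rw [hΦdef]; simp [hv]
      rw [hz, norm_zero]
      exact mul_nonneg (mul_nonneg hp0.le
        (Real.rpow_nonneg (mul_nonneg hM0 (norm_nonneg _)) _)) hM0
    · simp only [hΦdef, if_neg hv]
      calc ‖(p * F v ^ (p - 1)) • fderiv ℝ F v‖
          = |p * F v ^ (p - 1)| * ‖fderiv ℝ F v‖ := by rw [norm_smul, Real.norm_eq_abs]
        _ ≤ (p * (M * ‖v‖) ^ (p - 1)) * M := by
            apply mul_le_mul _ (hDFle v) (norm_nonneg _)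
              (mul_nonneg hp0.le (Real.rpow_nonneg (mul_nonneg hM0 (norm_nonneg _)) _))
            rw [abs_of_nonneg (mul_nonneg hp0.le (Real.rpow_nonneg (hFnonneg v) _))]
            have := Real.rpow_le_rpow (hFnonneg v) (hFle v) hp1.le
            nlinarith [this, hp0]
        _ = p * (M * ‖v‖) ^ (p - 1) * M := by ring
  -- derivative of F ^ p
  have hΦderiv : ∀ v, HasFDerivAt (fun w => F w ^ p) (Φ v) v := by
    intro v
    by_cases hv : v = 0
    · subst hv
      have hΦ0 : Φ 0 = 0 := by rw [hΦdef]; simp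
      rw [hΦ0, hasFDerivAt_iff_isLittleO_nhds_zero]
      simp only [ContinuousLinearMap.zero_apply, sub_zero, zero_add, hF0,
        Real.zero_rpow (ne_of_gt hp0)]
      have hbig : ∀ w : EuclideanSpace ℝ (Fin n), ‖F w ^ p‖ ≤ (M ^ p * ‖w‖ ^ (p-1)) * ‖w‖ := by
        intro w
        rw [Real.norm_eq_abs, abs_of_nonneg (Real.rpow_nonneg (hFnonneg w) p)]
        calc F w ^ p ≤ (M * ‖w‖) ^ p := Real.rpow_le_rpow (hFnonneg w) (hFle w) hp0.le
          _ = M ^ p * ‖w‖ ^ p := Real.mul_rpow hM0 (norm_nonneg w)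
          _ = (M ^ p * ‖w‖ ^ (p-1)) * ‖w‖ := by
              rw [mul_assoc]
              congr 1
              have : ‖w‖ ^ p = ‖w‖ ^ (p - 1 + 1) := by norm_num
              rw [this, Real.rpow_add_of_nonneg (norm_nonneg w) hp1.le zero_le_one, Real.rpow_one]
      rw [Asymptotics.isLittleO_iff]
      intro c hc
      have hg : Tendsto (fun w : EuclideanSpace ℝ (Fin n) => M ^ p * ‖w‖ ^ (p-1)) (𝓝 0) (𝓝 0) := by
        have h1 : Tendsto (fun w : EuclideanSpace ℝ (Fin n) => ‖w‖) (𝓝 0) (𝓝 0) := by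
          simpa using tendsto_norm_zero
        have h2 := h1.rpow_const (Or.inr hp1.le)
        rw [Real.zero_rpow (ne_of_gt hp1)] at h2
        simpa using h2.const_mul (M ^ p)
      filter_upwards [hg.eventually_lt_const hc] with w hw
      calc ‖F w ^ p‖ ≤ (M ^ p * ‖w‖ ^ (p-1)) * ‖w‖ := hbig w
        _ ≤ c * ‖w‖ := mul_le_mul_of_nonneg_right hw.le (norm_nonneg w)
    · have hd : HasDerivAt (fun y : ℝ => y ^ p) (p * F v ^ (p - 1)) (F v) :=
        Real.hasDerivAt_rpow_const (Or.inr hp.le)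
      have := hd.comp_hasFDerivAt v (hFdiff v hv).hasFDerivAt
      have hΦv : Φ v = (p * F v ^ (p - 1)) • fderiv ℝ F v := by rw [hΦdef]; simp [hv]
      rw [hΦv]; exact this
  have hΦcont : Continuous Φ := by
    rw [continuous_iff_continuousAt]
    intro v
    by_cases hv : v = 0
    · subst hv
      have hΦ0 : Φ 0 = 0 := by rw [hΦdef]; simp
      unfold ContinuousAt
      rw [hΦ0]
      apply squeeze_zero_norm hΦnorm
      have h1 : Tendsto (fun w : EuclideanSpace ℝ (Fin n) => M * ‖w‖) (𝓝 0) (𝓝 0) := by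
        have h0 : Tendsto (fun w : EuclideanSpace ℝ (Fin n) => ‖w‖) (𝓝 0) (𝓝 0) :=
          tendsto_norm_zero
        simpa using h0.const_mul M
      have h2 := h1.rpow_const (Or.inr hp1.le)
      rw [Real.zero_rpow (ne_of_gt hp1)] at h2
      have h3 := (h2.const_mul p).mul_const M
      simpa using h3
    · have hopen : {(0 : EuclideanSpace ℝ (Fin n))}ᶜ ∈ 𝓝 v := isOpen_compl_singleton.mem_nhds hv
      have hcg : ContinuousAt (fun u => (p * F u ^ (p - 1)) • fderiv ℝ F u) v := by
        apply ContinuousAt.smul (f := fun u => p * F u ^ (p - 1)) (g := fderiv ℝ F)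
        · exact (continuousAt_const.mul
            ((Real.continuousAt_rpow_const (F v) (p-1) (Or.inr hp1.le)).comp hFcont.continuousAt))
        · exact hDFcont.continuousAt hopen
      apply hcg.congr
      filter_upwards [hopen] with u hu
      rw [hΦdef]
      exact (if_neg (by simpa using hu)).symm
  have hae : ∀ᵐ z ∂μ, F (z - x₀) < R := by
    rw [ae_iff]
    convert hsupp using 2
    rfl
  have haeb : ∀ᵐ z ∂μ, ‖z - x₀‖ ≤ M₂ * R := by
    filter_upwards [hae] with z hz
    exact (hFge _).trans (by nlinarith [hFnonneg (z - x₀)])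
  -- continuity of integrands
  have hcont1 : ∀ x : EuclideanSpace ℝ (Fin n), Continuous fun z => F (z - x) ^ p := by
    intro x
    exact (hFcont.comp (continuous_id.sub continuous_const)).rpow_const (fun z => Or.inr hp0.le)
  have hcont2 : ∀ x : EuclideanSpace ℝ (Fin n),
      Continuous fun z : EuclideanSpace ℝ (Fin n) => -Φ (z - x) :=
    fun x => (hΦcont.comp (continuous_id.sub continuous_const)).neg
  -- integrability
  have hInt : ∀ x, Integrable (fun z => F (z - x) ^ p) μ := by
    intro x
    refine Integrable.mono' (integrable_const ((M * (M₂ * R + ‖x₀ - x‖)) ^ p))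
      (hcont1 x).aestronglyMeasurable ?_
    filter_upwards [haeb] with z hz
    rw [Real.norm_eq_abs, abs_of_nonneg (Real.rpow_nonneg (hFnonneg _) _)]
    apply Real.rpow_le_rpow (hFnonneg _) _ hp0.le
    refine (hFle _).trans (mul_le_mul_of_nonneg_left ?_ hM0)
    calc ‖z - x‖ ≤ ‖z - x₀‖ + ‖x₀ - x‖ := by
          simpa using norm_add_le (z - x₀) (x₀ - x)
      _ ≤ M₂ * R + ‖x₀ - x‖ := by linarith
  -- derivative of E
  set E' : EuclideanSpace ℝ (Fin n) → (EuclideanSpace ℝ (Fin n) →L[ℝ] ℝ) :=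
    fun x => ∫ z, -Φ (z - x) ∂μ with hE'def
  have hEderiv : ∀ x, HasFDerivAt E (E' x) x := by
    intro x
    rw [hE, hE'def]
    have hcomp : ∀ (z x' : EuclideanSpace ℝ (Fin n)),
        HasFDerivAt (fun y => F (z - y) ^ p) (-Φ (z - x')) x' := by
      intro z x'
      have hg : HasFDerivAt (fun y : EuclideanSpace ℝ (Fin n) => z - y)
          (-(ContinuousLinearMap.id ℝ (EuclideanSpace ℝ (Fin n)))) x' :=
        (hasFDerivAt_id x').const_sub z
      have h := (hΦderiv (z - x')).comp x' hg
      have : (Φ (z - x')).comp (-(ContinuousLinearMap.id ℝ (EuclideanSpace ℝ (Fin n))))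
          = -Φ (z - x') := by ext u; simp
      rw [this] at h
      exact h
    refine hasFDerivAt_integral_of_dominated_of_fderiv_le
      (F := fun (y z : EuclideanSpace ℝ (Fin n)) => F (z - y) ^ p)
      (F' := fun (y z : EuclideanSpace ℝ (Fin n)) => -Φ (z - y)) (x₀ := x) (μ := μ)
      (bound := fun _ => p * (M * (M₂ * R + ‖x₀ - x‖ + 1)) ^ (p - 1) * M)
      (Metric.ball_mem_nhds x one_pos) ?_ (hInt x) ?_ ?_ (integrable_const _) ?_
    · exact Eventually.of_forall fun y => (hcont1 y).aestronglyMeasurable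
    · exact (hcont2 x).aestronglyMeasurable
    · filter_upwards [haeb] with z hz
      intro y hy
      rw [norm_neg]
      refine (hΦnorm _).trans ?_
      have hzy : ‖z - y‖ ≤ M₂ * R + ‖x₀ - x‖ + 1 := by
        have h1 : ‖z - y‖ ≤ ‖z - x₀‖ + ‖x₀ - x‖ + ‖x - y‖ := by
          have := norm_add_le (z - x₀ + (x₀ - x)) (x - y)
          have h2 := norm_add_le (z - x₀) (x₀ - x)
          calc ‖z - y‖ = ‖z - x₀ + (x₀ - x) + (x - y)‖ := by abel_nf
            _ ≤ ‖z - x₀ + (x₀ - x)‖ + ‖x - y‖ := norm_add_le _ _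
            _ ≤ ‖z - x₀‖ + ‖x₀ - x‖ + ‖x - y‖ := by linarith
        have hxy : ‖x - y‖ < 1 := by
          rw [Metric.mem_ball, dist_comm] at hy
          simpa [dist_eq_norm] using hy
        linarith
      have hb : M * ‖z - y‖ ≤ M * (M₂ * R + ‖x₀ - x‖ + 1) := mul_le_mul_of_nonneg_left hzy hM0
      have h5 := Real.rpow_le_rpow (mul_nonneg hM0 (norm_nonneg _)) hb hp1.le
      have h6 := mul_le_mul_of_nonneg_right (mul_le_mul_of_nonneg_left h5 hp0.le) hM0
      linarith
    · filter_upwards with z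
      intro y hy
      exact hcomp z y
  -- continuity of E'
  have hE'cont : Continuous E' := by
    rw [continuous_iff_continuousAt]
    intro x
    rw [hE'def]
    refine continuousAt_of_dominated ?_ ?_ (μ := μ)
      (bound := fun _ => p * (M * (M₂ * R + ‖x₀ - x‖ + 1)) ^ (p - 1) * M)
      (integrable_const _) ?_
    · exact Eventually.of_forall fun y => (hcont2 y).aestronglyMeasurable
    · filter_upwards [Metric.ball_mem_nhds x one_pos] with y hy
      filter_upwards [haeb] with z hz
      rw [norm_neg]
      refine (hΦnorm _).trans ?_
      have hzy : ‖z - y‖ ≤ M₂ * R + ‖x₀ - x‖ + 1 := by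
        have hxy : ‖x - y‖ < 1 := by
          rw [Metric.mem_ball, dist_comm] at hy
          simpa [dist_eq_norm] using hy
        have : ‖z - y‖ ≤ ‖z - x₀‖ + ‖x₀ - x‖ + ‖x - y‖ := by
          calc ‖z - y‖ = ‖z - x₀ + (x₀ - x) + (x - y)‖ := by abel_nf
            _ ≤ ‖z - x₀ + (x₀ - x)‖ + ‖x - y‖ := norm_add_le _ _
            _ ≤ ‖z - x₀‖ + ‖x₀ - x‖ + ‖x - y‖ := by linarith [norm_add_le (z - x₀) (x₀ - x)]
        linarith
      have hb : M * ‖z - y‖ ≤ M * (M₂ * R + ‖x₀ - x‖ + 1) := mul_le_mul_of_nonneg_left hzy hM0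
      have h5 := Real.rpow_le_rpow (mul_nonneg hM0 (norm_nonneg _)) hb hp1.le
      have h6 := mul_le_mul_of_nonneg_right (mul_le_mul_of_nonneg_left h5 hp0.le) hM0
      linarith
    · filter_upwards with z
      exact ((hΦcont.comp (continuous_const.sub continuous_id)).neg).continuousAt
  -- E x₀ < R ^ p
  have hEx₀ : E x₀ < R ^ p := by
    have hsub : ∫ z, (R ^ p - F (z - x₀) ^ p) ∂μ = R ^ p - E x₀ := by
      rw [hE, integral_sub (integrable_const _) (hInt x₀), integral_const]
      simp [measure_univ]
    have hpos : 0 < ∫ z, (R ^ p - F (z - x₀) ^ p) ∂μ := by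
      rw [integral_pos_iff_support_of_nonneg_ae]
      · set A : Set (EuclideanSpace ℝ (Fin n)) := {z | F (z - x₀) < R} with hA
        have hAsub : A ⊆ Function.support fun z => R ^ p - F (z - x₀) ^ p := by
          intro z hz
          have : F (z - x₀) ^ p < R ^ p := Real.rpow_lt_rpow (hFnonneg _) hz hp0
          simp only [Function.mem_support]
          intro h; linarith
        have hApos : 0 < μ A := by
          by_contra h
          push_neg at h
          have hA0 : μ A = 0 := le_antisymm (le_of_not_gt (by simpa using h)) (zero_le)
          have : μ Set.univ ≤ μ A + μ Aᶜ := by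
            rw [← Set.union_compl_self A]
            exact measure_union_le _ _
          rw [hA0, hsupp] at this
          simp [measure_univ] at this
        exact lt_of_lt_of_le hApos (measure_mono hAsub)
      · filter_upwards [hae] with z hz
        have : F (z - x₀) ^ p ≤ R ^ p := Real.rpow_le_rpow (hFnonneg _) hz.le hp0.le
        simp only [Pi.zero_apply]; linarith
      · exact (integrable_const _).sub (hInt x₀)
    linarith
  -- small energy implies in ball
  have hEball : ∀ x, E x < R ^ p → F (x - x₀) < (1 + C) * R := by
    intro x hx
    by_contra h
    push_neg at h
    have hge : ∀ᵐ z ∂μ, R ^ p ≤ F (z - x) ^ p := by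
      filter_upwards [hae] with z hz
      have h1 : F (x - x₀) ≤ F (x - z) + F (z - x₀) := by
        have := hFadd (x - z) (z - x₀)
        simpa [sub_add_sub_cancel] using this
      have h2 : F (x - z) ≤ C * F (z - x) := by
        have := hrev (z - x)
        simpa [neg_sub] using this
      have h3 : (1 + C) * R ≤ C * F (z - x) + R := by nlinarith
      have h4 : R ≤ F (z - x) := by nlinarith
      exact Real.rpow_le_rpow hR.le h4 hp0.le
    have : ∫ z, (R ^ p : ℝ) ∂μ ≤ ∫ z, F (z - x) ^ p ∂μ :=
      integral_mono_ae (integrable_const _) (hInt x) hge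
    rw [integral_const] at this
    simp [measure_univ] at this
    rw [hE] at hx
    linarith
  have hr1rr : (1 + C) * R ≤ C * (1 + C) * R := by
    have h1 : (0:ℝ) ≤ (C - 1) * ((1 + C) * R) :=
      mul_nonneg (sub_nonneg.2 hC) (mul_nonneg (by linarith) hR.le)
    nlinarith [h1]
  have hEcont : Continuous E := by
    rw [continuous_iff_continuousAt]; exact fun x => (hEderiv x).continuousAt
  have hfderivE : ∀ x, fderiv ℝ E x = E' x := fun x => (hEderiv x).fderiv
  -- the descent field
  set w : EuclideanSpace ℝ (Fin n) → EuclideanSpace ℝ (Fin n) :=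
    fun x => ℓinv (-(E' x)) with hwdef
  set g : EuclideanSpace ℝ (Fin n) → ℝ := fun x => F (w x) * F (w x) with hgdef
  have hgnonneg : ∀ x, 0 ≤ g x := fun x => mul_self_nonneg _
  have hgcont : Continuous g := by
    have hwcont : Continuous w := hℓinvcont.comp hE'cont.neg
    exact ((hFcont.comp hwcont).mul (hFcont.comp hwcont))
  have hdissip : ∀ x, E' x (w x) = -(g x) := by
    intro x
    have h1 : ℓ (w x) = -(E' x) := hright _
    have h2 : E' x = -(ℓ (w x)) := by rw [h1, neg_neg]
    rw [h2, hgdef]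
    simp [hℓapp (w x)]
  have hcrit0 : ∀ x, E' x = 0 → w x = 0 := by
    intro x hx
    show ℓinv (-(E' x)) = 0
    rw [hx, neg_zero, ← hℓ0]
    exact hleft 0
  have hgpos : ∀ x, E' x ≠ 0 → 0 < g x := by
    intro x hx
    have hw : w x ≠ 0 := by
      intro h
      apply hx
      have hr := hright (-(E' x))
      have h' : ℓinv (-(E' x)) = 0 := h
      rw [h', hℓ0] at hr
      simpa using hr.symm
    have : F (w x) ≠ 0 := fun h => hw ((hFeq0 _).1 h)
    have hFw : 0 < F (w x) := lt_of_le_of_ne (hFnonneg _) (Ne.symm this)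
    exact mul_pos hFw hFw
  -- energy along the flow
  set Vf : ℝ → ℝ := fun a => E (γ a) with hVdef
  have hVode : ∀ a : ℝ, 0 ≤ a → HasDerivAt Vf (-(g (γ a))) a := by
    intro a ha
    have h1 : HasDerivAt γ (w (γ a)) a := by
      have := hode a ha
      rwa [hfderivE] at this
    have h2 := (hEderiv (γ a)).comp_hasDerivAt a h1
    rw [hdissip (γ a)] at h2
    exact h2
  have hVanti : AntitoneOn Vf (Ici 0) := by
    apply antitoneOn_of_deriv_nonpos (convex_Ici 0)
    · intro a ha
      exact ((hVode a ha).continuousAt).continuousWithinAt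
    · intro a ha
      rw [interior_Ici] at ha
      exact (hVode a (le_of_lt ha)).differentiableAt.differentiableWithinAt
    · intro a ha
      rw [interior_Ici] at ha
      rw [(hVode a (le_of_lt ha)).deriv]
      simpa using hgnonneg (γ a)
  have hVle : ∀ a : ℝ, 0 ≤ a → Vf a ≤ E x₀ := by
    intro a ha
    have h1 := hVanti (self_mem_Ici) ha ha
    have h0 : Vf 0 = E x₀ := by show E (γ 0) = E x₀; rw [hγ0]
    linarith
  -- part 1 : the flow stays in the big ball
  have hstay : ∀ a : ℝ, 0 ≤ a → F (γ a - x₀) < (1 + C) * R := by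
    intro a ha
    exact hEball _ (lt_of_le_of_lt (hVle a ha) hEx₀)
  have hstay' : ∀ a : ℝ, 0 ≤ a → F (γ a - x₀) ≤ C * (1 + C) * R :=
    fun a ha => le_trans (le_of_lt (hstay a ha)) hr1rr
  refine ⟨hstay', ?_⟩
  -- the big ball
  set B : Set (EuclideanSpace ℝ (Fin n)) := {x | F (x - x₀) ≤ C * (1 + C) * R} with hBdef
  have hBcpt : IsCompact B := hcpt x₀ _
  have hBne : B.Nonempty :=
    ⟨x₀, by
      simp only [hBdef, mem_setOf_eq, sub_self, hF0]
      exact mul_nonneg (mul_nonneg hC0.le (by linarith)) hR.le⟩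
  have hBconv : Convex ℝ B := by
    intro x hx y hy a b ha hb hab
    simp only [hBdef, mem_setOf_eq] at hx hy ⊢
    have hid : a • x + b • y - x₀ = a • (x - x₀) + b • (y - x₀) := by
      have h2 : a • (x - x₀) + b • (y - x₀) = a • x + b • y - (a • x₀ + b • x₀) := by
        rw [smul_sub, smul_sub]; abel
      rw [h2, ← add_smul, hab, one_smul]
    rw [hid]
    calc F (a • (x - x₀) + b • (y - x₀)) ≤ F (a • (x - x₀)) + F (b • (y - x₀)) := hFadd _ _
      _ = a * F (x - x₀) + b * F (y - x₀) := by rw [hFsmul a ha, hFsmul b hb]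
      _ ≤ a * (C * (1 + C) * R) + b * (C * (1 + C) * R) := by
          apply add_le_add (mul_le_mul_of_nonneg_left hx ha) (mul_le_mul_of_nonneg_left hy hb)
      _ = C * (1 + C) * R := by rw [← add_mul, hab, one_mul]
  -- the minimizer
  obtain ⟨ep, hepB, hepmin⟩ := hBcpt.exists_isMinOn hBne hEcont.continuousOn
  have hepmin' : ∀ y, F (y - x₀) ≤ C * (1 + C) * R → E ep ≤ E y := fun y hy => hepmin hy
  have huniq : ∀ m, m ∈ B → (∀ y ∈ B, E m ≤ E y) → m = ep := by
    intro m hm hmmin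
    by_contra hne
    have hmem : (1/2 : ℝ) • m + (1/2 : ℝ) • ep ∈ B :=
      hBconv hm hepB (by norm_num) (by norm_num) (by norm_num)
    have hlt := hEconv.2 hm hepB hne (by norm_num : (0:ℝ) < 1/2) (by norm_num : (0:ℝ) < 1/2)
      (by norm_num)
    have h1 : E m ≤ E ((1/2 : ℝ) • m + (1/2 : ℝ) • ep) := hmmin _ hmem
    have h2 : E ep ≤ E m := hepmin hm
    have h3 : E m ≤ E ep := hmmin _ hepB
    have : E m = E ep := le_antisymm h3 h2
    rw [this] at hlt h1
    norm_num at hlt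
    linarith
  -- critical points in B are minimizers
  have hcrit : ∀ x ∈ B, E' x = 0 → ∀ y ∈ B, E x ≤ E y := by
    intro x hx hx' y hy
    have hconv := hEconv.convexOn
    set ψ : ℝ → ℝ := fun t => E (x + t • (y - x)) with hψdef
    have hψ0 : HasDerivAt ψ 0 0 := by
      have hcurve : HasDerivAt (fun t : ℝ => x + t • (y - x)) (y - x) 0 := by
        simpa using ((hasDerivAt_id (0:ℝ)).smul_const (y - x)).const_add x
      have hd : HasFDerivAt E (E' x) ((fun t : ℝ => x + t • (y - x)) 0) := by
        simpa using hEderiv x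
      have := hd.comp_hasDerivAt 0 hcurve
      simp only [hx', ContinuousLinearMap.zero_apply] at this
      exact this
    have hslope : ∀ t : ℝ, t ∈ Ioc (0:ℝ) 1 → (ψ t - ψ 0) / t ≤ E y - E x := by
      intro t ht
      have hcomb : x + t • (y - x) = (1 - t) • x + t • y := by
        rw [smul_sub, sub_smul, one_smul]
        abel
      have hle := hconv.2 hx hy (by linarith [ht.2, ht.1] : (0:ℝ) ≤ 1 - t) (le_of_lt ht.1)
        (by ring)
      rw [← hcomb] at hle
      have hψt : ψ t ≤ (1 - t) * E x + t * E y := hle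
      have hψz : ψ 0 = E x := by simp [hψdef]
      rw [div_le_iff₀ ht.1, hψz]
      nlinarith [ht.1, ht.2]
    have htend : Tendsto (fun t => (ψ t - ψ 0) / t) (𝓝[>] (0:ℝ)) (𝓝 0) := by
      have := hasDerivAt_iff_tendsto_slope.1 hψ0
      have hmono : 𝓝[>] (0:ℝ) ≤ 𝓝[≠] (0:ℝ) :=
        nhdsWithin_mono 0 (fun t ht => ne_of_gt ht)
      have h2 := this.mono_left hmono
      apply h2.congr
      intro t
      rw [slope_def_field, sub_zero]
    have h0le : (0:ℝ) ≤ E y - E x := by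
      apply le_of_tendsto htend
      filter_upwards [Ioc_mem_nhdsGT_of_mem (Set.left_mem_Ico.2 one_pos)] with t ht
      exact hslope t ht
    linarith
  -- the invariant compact set
  have hx₀B : x₀ ∈ B := by
    simp only [hBdef, mem_setOf_eq, sub_self, hF0]
    exact mul_nonneg (mul_nonneg hC0.le (by linarith)) hR.le
  set S : Set (EuclideanSpace ℝ (Fin n)) := {x | F (x - x₀) ≤ (1 + C) * R ∧ E x ≤ E x₀}
    with hSdef
  have hSsub : S ⊆ B := fun x hx => le_trans hx.1 hr1rr
  have hScl : IsClosed S := by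
    have : S = {x | F (x - x₀) ≤ (1 + C) * R} ∩ {x | E x ≤ E x₀} := rfl
    rw [this]
    exact (isClosed_le (hFcont.comp (continuous_id.sub continuous_const))
      continuous_const).inter (isClosed_le hEcont continuous_const)
  have hScpt : IsCompact S :=
    IsCompact.of_isClosed_subset (hcpt x₀ ((1 + C) * R)) hScl (fun x hx => hx.1)
  have hγS : ∀ a : ℝ, 0 ≤ a → γ a ∈ S := fun a ha => ⟨(hstay a ha).le, hVle a ha⟩
  have hEep : E ep ≤ E x₀ := hepmin hx₀B
  have hepS : ep ∈ S := ⟨(hEball ep (lt_of_le_of_lt hEep hEx₀)).le, hEep⟩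
  have hgS : ∀ x ∈ S, x ≠ ep → 0 < g x := by
    intro x hxS hxne
    apply hgpos
    intro hE'0
    exact hxne (huniq x (hSsub hxS) (hcrit x (hSsub hxS) hE'0))
  have hVlow : ∀ a : ℝ, 0 ≤ a → E ep ≤ Vf a := fun a ha => hepmin (hSsub (hγS a ha))
  -- the energy converges to the minimum
  have hkey : ∀ ε : ℝ, 0 < ε → ∃ a₀ : ℝ, 0 ≤ a₀ ∧ Vf a₀ < E ep + ε := by
    intro ε hε
    by_contra hcon
    push_neg at hcon
    set T : Set (EuclideanSpace ℝ (Fin n)) := {x | x ∈ S ∧ E ep + ε ≤ E x} with hTdef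
    have hTcpt : IsCompact T := by
      have : T = S ∩ {x | E ep + ε ≤ E x} := rfl
      rw [this]
      exact hScpt.inter_right (isClosed_le continuous_const hEcont)
    have hTne : T.Nonempty := by
      refine ⟨x₀, ?_, ?_⟩
      · have := hγS 0 le_rfl; rwa [hγ0] at this
      · have := hcon 0 le_rfl
        have h0 : Vf 0 = E x₀ := by show E (γ 0) = E x₀; rw [hγ0]
        linarith
    obtain ⟨xc, hxcT, hxcmin⟩ := hTcpt.exists_isMinOn hTne hgcont.continuousOn
    have hc : 0 < g xc := by
      apply hgS xc hxcT.1
      intro h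
      rw [h] at hxcT
      have := hxcT.2
      linarith
    have hγT : ∀ a : ℝ, 0 ≤ a → γ a ∈ T := fun a ha => ⟨hγS a ha, hcon a ha⟩
    set W : ℝ → ℝ := fun a => Vf a + g xc * a with hWdef
    have hWanti : AntitoneOn W (Ici 0) := by
      have hWode : ∀ a : ℝ, 0 ≤ a → HasDerivAt W (-(g (γ a)) + g xc) a := by
        intro a ha
        have h2 : HasDerivAt (fun a : ℝ => g xc * a) (g xc) a := by
          simpa using (hasDerivAt_id a).const_mul (g xc)
        exact (hVode a ha).add h2
      apply antitoneOn_of_deriv_nonpos (convex_Ici 0)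
      · exact fun a ha => ((hWode a ha).continuousAt).continuousWithinAt
      · intro a ha
        rw [interior_Ici] at ha
        exact (hWode a (le_of_lt ha)).differentiableAt.differentiableWithinAt
      · intro a ha
        rw [interior_Ici] at ha
        rw [(hWode a (le_of_lt ha)).deriv]
        have h5 : g xc ≤ g (γ a) := hxcmin (hγT a (le_of_lt ha))
        linarith [h5]
    set a1 : ℝ := (Vf 0 - E ep) / g xc + 1 with ha1def
    have hVf0 : E ep ≤ Vf 0 := hVlow 0 le_rfl
    have ha1pos : 0 ≤ a1 := by
      have hd : (0:ℝ) ≤ (Vf 0 - E ep) / g xc :=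
        div_nonneg (by linarith) hc.le
      rw [ha1def]; linarith
    have hW1 : W a1 ≤ W 0 := hWanti self_mem_Ici (mem_Ici.2 ha1pos) ha1pos
    have hWa1 : Vf a1 + g xc * a1 ≤ Vf 0 := by
      have hW0 : W 0 = Vf 0 := by rw [hWdef]; simp
      rw [← hW0]; exact hW1
    have hga1 : g xc * a1 = (Vf 0 - E ep) + g xc := by
      rw [ha1def, mul_add, mul_one, mul_div_cancel₀ _ (ne_of_gt hc)]
    have := hVlow a1 ha1pos
    rw [hga1] at hWa1
    linarith
  have hVtend : Tendsto Vf atTop (𝓝 (E ep)) := by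
    rw [Metric.tendsto_atTop]
    intro ε hε
    obtain ⟨a₀, ha₀, hVa₀⟩ := hkey ε hε
    refine ⟨a₀, fun a ha => ?_⟩
    have ha0 : 0 ≤ a := le_trans ha₀ ha
    have h1 : Vf a ≤ Vf a₀ := hVanti (mem_Ici.2 ha₀) (mem_Ici.2 ha0) ha
    have h2 : E ep ≤ Vf a := hVlow a ha0
    rw [Real.dist_eq, abs_lt]
    constructor <;> linarith
  -- convergence of the flow
  have hγtend : Tendsto γ atTop (𝓝 ep) := by
    rw [Metric.tendsto_atTop]
    intro ε hε
    set T2 : Set (EuclideanSpace ℝ (Fin n)) := {x | x ∈ S ∧ ε ≤ dist x ep} with hT2def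
    by_cases hT2ne : T2.Nonempty
    · have hT2cpt : IsCompact T2 := by
        have : T2 = S ∩ {x | ε ≤ dist x ep} := rfl
        rw [this]
        exact hScpt.inter_right
          (isClosed_le continuous_const (continuous_id.dist continuous_const))
      obtain ⟨xm, hxmT, hxmmin⟩ := hT2cpt.exists_isMinOn hT2ne hEcont.continuousOn
      have hxm_ne : xm ≠ ep := by
        intro h
        have := hxmT.2
        rw [h, dist_self] at this
        linarith
      have hδ : E ep < E xm := by
        have hle : E ep ≤ E xm := hepmin (hSsub hxmT.1)
        rcases lt_or_eq_of_le hle with h | h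
        · exact h
        · exfalso
          apply hxm_ne
          apply huniq xm (hSsub hxmT.1)
          intro y hy
          rw [← h]
          exact hepmin hy
      rw [Metric.tendsto_atTop] at hVtend
      obtain ⟨a₀, ha⟩ := hVtend (E xm - E ep) (by linarith)
      refine ⟨max a₀ 0, fun a haa => ?_⟩
      have ha0 : 0 ≤ a := le_trans (le_max_right _ _) haa
      have h2 := ha a (le_trans (le_max_left _ _) haa)
      rw [Real.dist_eq, abs_lt] at h2
      by_contra hdist
      push_neg at hdist
      have hmem : γ a ∈ T2 := ⟨hγS a ha0, hdist⟩
      have h3 : E xm ≤ E (γ a) := hxmmin hmem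
      have h4 : Vf a = E (γ a) := rfl
      linarith [h2.2]
    · refine ⟨0, fun a ha => ?_⟩
      by_contra hdist
      push_neg at hdist
      exact hT2ne ⟨γ a, hγS a ha, hdist⟩
  exact ⟨ep, ⟨hepB, hepmin'⟩, fun m hm => huniq m hm.1 (fun y hy => hm.2 y hy), hγtend⟩
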